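/- If B is even, then Randomized Integer-Division hashing h(x₁,…,x_n) = Σᵢ B^{n-i} h₁(xᵢ) mod 2^L is uniform for every n ≥ 1. -/

import Mathlib

/-- Uniform probability of an event over a finite sample space. -/
noncomputable def prob (Ω : Type*) (p : Ω → Prop) : ℚ :=
  (Nat.card {ω : Ω // p ω} : ℚ) / (Nat.card Ω : ℚ)

/-- Randomized Integer-Division hashing is uniform when B is even, for every n ≥ 1. -/
theorem integer_division_uniform_even_B
    {σ : Type*} [Fintype σ] (n L B : ℕ) (hB : Even B) (hn : 1 ≤ n)
    (x : Fin n → σ) (y : ZMod (2 ^ L)) :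
    prob (σ → ZMod (2 ^ L))
      (fun h₁ => (∑ i : Fin n, (B : ZMod (2 ^ L)) ^ (n - 1 - (i : ℕ)) * h₁ (x i)) = y)
      = 1 / 2 ^ L := by
  classical
  haveI : NeZero (2 ^ L) := ⟨by positivity⟩
  set last : Fin n := ⟨n - 1, by omega⟩ with hlast
  set s : σ := x last with hs
  set c : ℕ := ∑ i : Fin n, if x i = s then B ^ (n - 1 - (i : ℕ)) else 0 with hc
  -- c is odd
  have hodd : Odd c := by
    rw [hc, ← Finset.sum_erase_add _ _ (Finset.mem_univ last)]
    have h1 : (if x last = s then B ^ (n - 1 - (last : ℕ)) else 0) = 1 := by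
      simp [hs, hlast]
    rw [h1]
    have heven : Even (∑ i ∈ Finset.univ.erase last,
        if x i = s then B ^ (n - 1 - (i : ℕ)) else 0) := by
      apply Finset.even_sum
      intro i hi
      have hine : i ≠ last := (Finset.mem_erase.mp hi).1
      have hlt : (i : ℕ) < n - 1 := by
        have h2 := i.isLt
        have h3 : (i : ℕ) ≠ n - 1 := fun h => hine (Fin.ext (by simp [hlast, h]))
        omega
      by_cases hx : x i = s
      · simp only [hx, if_true]
        exact hB.pow_of_ne_zero (by omega)
      · simp [hx]
    exact heven.add_one
  have hu : IsUnit ((c : ZMod (2 ^ L))) := by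
    rw [ZMod.isUnit_iff_coprime]
    exact Nat.Coprime.pow_right _ (Nat.coprime_two_right.mpr hodd)
  set u := hu.unit with hu'
  have hus : (u : ZMod (2 ^ L)) = (c : ZMod (2 ^ L)) := hu.unit_spec
  have hcM : ((c : ℕ) : ZMod (2 ^ L))
      = ∑ i : Fin n, if x i = s then (B : ZMod (2 ^ L)) ^ (n - 1 - (i : ℕ)) else 0 := by
    rw [hc]
    push_cast
    rfl
  -- key decomposition
  have key : ∀ h : σ → ZMod (2 ^ L),
      (∑ i : Fin n, (B : ZMod (2 ^ L)) ^ (n - 1 - (i : ℕ)) * h (x i))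
      = (c : ZMod (2 ^ L)) * h s
        + ∑ i : Fin n, (B : ZMod (2 ^ L)) ^ (n - 1 - (i : ℕ)) * (Function.update h s 0) (x i) := by
    intro h
    rw [hcM, Finset.sum_mul, ← Finset.sum_add_distrib]
    refine Finset.sum_congr rfl fun i _ => ?_
    by_cases hx : x i = s
    · rw [hx]; simp
    · simp [hx, Function.update_of_ne hx]
  -- the equivalence
  let ef : ({t : σ // t ≠ s} → ZMod (2 ^ L)) → (σ → ZMod (2 ^ L)) :=
    fun g t => if ht : t = s then 0 else g ⟨t, ht⟩
  have hef0 : ∀ g, ef g s = 0 := fun g => by simp [ef]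
  have hefup : ∀ g, Function.update (ef g) s 0 = ef g := by
    intro g; funext t
    by_cases ht : t = s
    · subst ht; simp [hef0]
    · simp [Function.update_of_ne ht]
  have hefres : ∀ h : σ → ZMod (2 ^ L),
      ef (fun t : {t : σ // t ≠ s} => h t) = Function.update h s 0 := by
    intro h; funext t
    by_cases ht : t = s
    · subst ht; simp [ef]
    · simp [ef, ht, Function.update_of_ne ht]
  let E : {h : σ → ZMod (2 ^ L) //
      (∑ i : Fin n, (B : ZMod (2 ^ L)) ^ (n - 1 - (i : ℕ)) * h (x i)) = y}
      ≃ ({t : σ // t ≠ s} → ZMod (2 ^ L)) :=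
    { toFun := fun h t => h.1 t.1
      invFun := fun g => ⟨Function.update (ef g) s
        ((u⁻¹ : (ZMod (2 ^ L))ˣ)
          * (y - ∑ i : Fin n, (B : ZMod (2 ^ L)) ^ (n - 1 - (i : ℕ)) * ef g (x i))), by
          rw [key, Function.update_self, Function.update_idem, hefup]
          rw [← hus, Units.mul_inv_cancel_left]
          ring⟩
      left_inv := by
        rintro ⟨h, hP⟩
        apply Subtype.ext
        simp only
        rw [hefres h]
        have hy : y - ∑ i : Fin n,
            (B : ZMod (2 ^ L)) ^ (n - 1 - (i : ℕ)) * (Function.update h s 0) (x i)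
            = (c : ZMod (2 ^ L)) * h s := by
          rw [← hP, key h]; ring
        rw [hy, ← hus, Units.inv_mul_cancel_left, Function.update_idem,
          Function.update_eq_self]
      right_inv := by
        intro g
        funext t
        simp only
        rw [Function.update_of_ne t.2]
        simp only [ef]
        rw [dif_neg t.2] }
  -- counting
  have hcard1 : Nat.card {h : σ → ZMod (2 ^ L) //
      (∑ i : Fin n, (B : ZMod (2 ^ L)) ^ (n - 1 - (i : ℕ)) * h (x i)) = y}
      = (2 ^ L) ^ (Fintype.card σ - 1) := by
    rw [Nat.card_congr E, Nat.card_fun]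
    congr 1
    · rw [Nat.card_eq_fintype_card, ZMod.card]
    · rw [Nat.card_eq_fintype_card]
      rw [Fintype.card_subtype_compl, Fintype.card_subtype_eq]
  have hcard2 : Nat.card (σ → ZMod (2 ^ L)) = (2 ^ L) ^ (Fintype.card σ) := by
    simp [Nat.card_fun, Nat.card_eq_fintype_card, ZMod.card]
  have hσ : 1 ≤ Fintype.card σ := Fintype.card_pos_iff.mpr ⟨s⟩
  rw [prob, hcard1, hcard2]
  have hk : Fintype.card σ = (Fintype.card σ - 1) + 1 := (Nat.succ_pred_eq_of_pos hσ).symm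
  rw [hk, pow_succ]
  have hne : ((2 : ℚ) ^ L) ^ (Fintype.card σ - 1) ≠ 0 := by positivity
  push_cast
  rw [mul_comm, div_mul_eq_div_div, div_right_comm, div_self hne, one_div]
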